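/- Let W be the group presented by generators x, y, z and relators x², y², z², (xy)³, (yz)³, and let Δ be the group presented by generators x, y, z and relators x², y², z², (xy)³, (yz)³, (xz)² (the spherical triangle group Δ(3,3,2), isomorphic to the symmetric group S₄). Let φ : W → Δ be the canonical surjection sending generators to generators. Then the kernel of φ is a free group, and it is nonabelian (in particular, it is free of rank at least 2). -/

import Mathlib

/-- The relators of `W = ⟨x, y, z | x², y², z², (xy)³, (yz)³⟩`, with `x, y, z` the generators
`0, 1, 2 : Fin 3`. -/
def relsW : Set (FreeGroup (Fin 3)) :=
  {FreeGroup.of 0 ^ 2, FreeGroup.of 1 ^ 2, FreeGroup.of 2 ^ 2,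
    (FreeGroup.of 0 * FreeGroup.of 1) ^ 3, (FreeGroup.of 1 * FreeGroup.of 2) ^ 3}

/-- The relators of the triangle group `Δ(3,3,2) = ⟨x, y, z | x², y², z², (xy)³, (yz)³, (xz)²⟩`. -/
def relsDelta : Set (FreeGroup (Fin 3)) :=
  {FreeGroup.of 0 ^ 2, FreeGroup.of 1 ^ 2, FreeGroup.of 2 ^ 2,
    (FreeGroup.of 0 * FreeGroup.of 1) ^ 3, (FreeGroup.of 1 * FreeGroup.of 2) ^ 3,
    (FreeGroup.of 0 * FreeGroup.of 2) ^ 2}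


abbrev F2 := FreeGroup (Fin 2)

def pp : F2 := FreeGroup.of 0
def qq : F2 := FreeGroup.of 1

def fA : F2 →* F2 := FreeGroup.lift ![pp⁻¹, pp⁻¹ * qq]
def fB : F2 →* F2 := FreeGroup.lift ![qq, pp]

lemma fA_p : fA pp = pp⁻¹ := by simp [fA, pp, qq]
lemma fA_q : fA qq = pp⁻¹ * qq := by simp [fA, pp, qq]
lemma fB_p : fB pp = qq := by simp [fB, pp, qq]
lemma fB_q : fB qq = pp := by simp [fB, pp, qq]

lemma fAA : fA.comp fA = MonoidHom.id F2 := by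
  ext i; fin_cases i <;> simp [fA, pp, qq]

lemma fBB : fB.comp fB = MonoidHom.id F2 := by
  ext i; fin_cases i <;> simp [fB, pp, qq]

def A : MulAut F2 := MonoidHom.toMulEquiv fA fA fAA fAA
def B : MulAut F2 := MonoidHom.toMulEquiv fB fB fBB fBB

lemma A_apply (x : F2) : A x = fA x := rfl
lemma B_apply (x : F2) : B x = fB x := rfl

def rels3 : Set F2 :=
  {FreeGroup.of 0 ^ 2, FreeGroup.of 1 ^ 2, (FreeGroup.of 0 * FreeGroup.of 1) ^ 3}

abbrev S3 := PresentedGroup rels3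

-- MulAut equality via action on generators
lemma mulAut_ext {e f : MulAut F2} (h0 : e pp = f pp) (h1 : e qq = f qq) : e = f := by
  have : (e : F2 →* F2) = f := by
    ext i
    fin_cases i
    · exact h0
    · exact h1
  exact MulEquiv.toMonoidHom_injective this

lemma hα : ∀ r ∈ rels3, FreeGroup.lift ![A, B] r = 1 := by
  rintro r (rfl | rfl | rfl) <;>
  · simp only [map_pow, map_mul, FreeGroup.lift_apply_of, Matrix.cons_val_zero, Matrix.cons_val_one,
      Matrix.head_cons]
    apply mulAut_ext <;>
      simp [pow_succ, MulAut.mul_apply, A_apply, B_apply, fA_p, fA_q, fB_p, fB_q, map_mul, map_inv,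
        MulAut.one_apply]

def α : S3 →* MulAut F2 := PresentedGroup.toGroup hα

lemma α_x : α (PresentedGroup.of 0) = A := PresentedGroup.toGroup.of hα
lemma α_y : α (PresentedGroup.of 1) = B := PresentedGroup.toGroup.of hα

abbrev G := SemidirectProduct F2 S3 α

abbrev W := PresentedGroup relsW

open SemidirectProduct

lemma mk_rel {a : Type} {rels : Set (FreeGroup a)} {r : FreeGroup a} (h : r ∈ rels) :
    PresentedGroup.mk rels r = 1 :=
  (QuotientGroup.eq_one_iff _).mpr (Subgroup.subset_normalClosure h)

lemma sx2 : (PresentedGroup.of 0 : S3) ^ 2 = 1 := by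
  have := mk_rel (show FreeGroup.of 0 ^ 2 ∈ rels3 by left; rfl)
  simpa [PresentedGroup.of] using this

lemma sy2 : (PresentedGroup.of 1 : S3) ^ 2 = 1 := by
  have := mk_rel (show FreeGroup.of 1 ^ 2 ∈ rels3 by right; left; rfl)
  simpa [PresentedGroup.of] using this

lemma sxy3 : ((PresentedGroup.of 0 : S3) * PresentedGroup.of 1) ^ 3 = 1 := by
  have := mk_rel (show (FreeGroup.of 0 * FreeGroup.of 1) ^ 3 ∈ rels3 by right; right; rfl)
  simpa [PresentedGroup.of] using this

lemma syx3 : ((PresentedGroup.of 1 : S3) * PresentedGroup.of 0) ^ 3 = 1 := by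
  have h2 : ((PresentedGroup.of 1 : S3) * PresentedGroup.of 0) ^ 3 =
      (PresentedGroup.of 0)⁻¹ * ((PresentedGroup.of 0 : S3) * PresentedGroup.of 1) ^ 3 *
        PresentedGroup.of 0 := by
    simp [pow_succ]; group
  rw [h2, sxy3]; group

-- the images of the generators of W in G
def gx : G := inr (PresentedGroup.of 0)
def gy : G := inr (PresentedGroup.of 1)
def gz : G := inl pp * inr (PresentedGroup.of 0)

set_option maxRecDepth 4000
lemma gz2 : (gz : G) ^ 2 = 1 := by
  ext
  · simp [gz, pow_succ, mul_left, mul_right, α_x, A_apply, fA_p]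
  · simp only [gz, pow_succ, pow_zero, one_mul, mul_right, right_inl, right_inr, one_mul, mul_one]
    rw [← pow_two, sx2, one_right]

lemma gxy3 : ((gx : G) * gy) ^ 3 = 1 := by
  rw [gx, gy, ← map_mul, ← map_pow, sxy3, map_one]

lemma gyz3 : ((gy : G) * gz) ^ 3 = 1 := by
  ext
  · simp [gy, gz, pow_succ, mul_left, mul_right, α_x, α_y, map_mul, A_apply, B_apply,
      fA_p, fA_q, fB_p, fB_q]
  · simp only [gy, gz, pow_succ, pow_zero, one_mul, mul_right, right_inl, right_inr,
      one_mul, mul_one, one_right]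
    have := syx3
    rw [pow_succ, pow_succ, pow_one] at this
    exact this

lemma hψ : ∀ r ∈ relsW, FreeGroup.lift ![gx, gy, gz] r = 1 := by
  rintro r (rfl | rfl | rfl | rfl | rfl) <;>
    simp only [map_pow, map_mul, FreeGroup.lift_apply_of, Matrix.cons_val_zero, Matrix.cons_val_one,
      Matrix.head_cons, Matrix.cons_val_two, Matrix.tail_cons]
  · rw [gx, ← map_pow, sx2, map_one]
  · rw [gy, ← map_pow, sy2, map_one]
  · exact gz2
  · exact gxy3
  · exact gyz3

def ψ : W →* G := PresentedGroup.toGroup hψ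

lemma ψ0 : ψ (PresentedGroup.of 0) = gx := PresentedGroup.toGroup.of hψ
lemma ψ1 : ψ (PresentedGroup.of 1) = gy := PresentedGroup.toGroup.of hψ
lemma ψ2 : ψ (PresentedGroup.of 2) = gz := PresentedGroup.toGroup.of hψ

-- relations in W
lemma wx2 : (PresentedGroup.of 0 : W) ^ 2 = 1 := by
  have := mk_rel (show FreeGroup.of 0 ^ 2 ∈ relsW by left; rfl); simpa [PresentedGroup.of] using this
lemma wy2 : (PresentedGroup.of 1 : W) ^ 2 = 1 := by
  have := mk_rel (show FreeGroup.of 1 ^ 2 ∈ relsW by right; left; rfl); simpa [PresentedGroup.of] using this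
lemma wz2 : (PresentedGroup.of 2 : W) ^ 2 = 1 := by
  have := mk_rel (show FreeGroup.of 2 ^ 2 ∈ relsW by right; right; left; rfl)
  simpa [PresentedGroup.of] using this
lemma wxy3 : ((PresentedGroup.of 0 : W) * PresentedGroup.of 1) ^ 3 = 1 := by
  have := mk_rel (show (FreeGroup.of 0 * FreeGroup.of 1) ^ 3 ∈ relsW by
    right; right; right; left; rfl)
  simpa [PresentedGroup.of] using this
lemma wyz3 : ((PresentedGroup.of 1 : W) * PresentedGroup.of 2) ^ 3 = 1 := by
  have := mk_rel (show (FreeGroup.of 1 * FreeGroup.of 2) ^ 3 ∈ relsW by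
    right; right; right; right; rfl)
  simpa [PresentedGroup.of] using this

section Wnotation
local notation "X" => (PresentedGroup.of 0 : W)
local notation "Y" => (PresentedGroup.of 1 : W)
local notation "Z" => (PresentedGroup.of 2 : W)

lemma ixc : ∀ w : W, X * (X * w) = w := by
  intro w; rw [← mul_assoc, ← pow_two, wx2, one_mul]
lemma iyc : ∀ w : W, Y * (Y * w) = w := by
  intro w; rw [← mul_assoc, ← pow_two, wy2, one_mul]
lemma izc : ∀ w : W, Z * (Z * w) = w := by
  intro w; rw [← mul_assoc, ← pow_two, wz2, one_mul]
lemma ix : X * X = 1 := by rw [← pow_two, wx2]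
lemma iy : Y * Y = 1 := by rw [← pow_two, wy2]
lemma iz : Z * Z = 1 := by rw [← pow_two, wz2]
lemma invx : X⁻¹ = X := inv_eq_of_mul_eq_one_right ix
lemma invy : Y⁻¹ = Y := inv_eq_of_mul_eq_one_right iy
lemma invz : Z⁻¹ = Z := inv_eq_of_mul_eq_one_right iz

lemma b1 : X * (Y * X) = Y * (X * Y) := by
  have h := wxy3
  rw [pow_succ, pow_succ, pow_one] at h
  have h2 : (X * (Y * X)) * (Y * (X * Y)) = 1 := by
    rw [show (X * (Y * X)) * (Y * (X * Y)) = X * Y * (X * Y) * (X * Y) from by group]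
    exact h
  rw [eq_inv_of_mul_eq_one_left h2, mul_inv_rev, mul_inv_rev, invx, invy, mul_assoc]
lemma b2 : Y * (Z * Y) = Z * (Y * Z) := by
  have h := wyz3
  rw [pow_succ, pow_succ, pow_one] at h
  have h2 : (Y * (Z * Y)) * (Z * (Y * Z)) = 1 := by
    rw [show (Y * (Z * Y)) * (Z * (Y * Z)) = Y * Z * (Y * Z) * (Y * Z) from by group]
    exact h
  rw [eq_inv_of_mul_eq_one_left h2, mul_inv_rev, mul_inv_rev, invy, invz, mul_assoc]
lemma b1c : ∀ w : W, X * (Y * (X * w)) = Y * (X * (Y * w)) := by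
  intro w
  rw [show X * (Y * (X * w)) = (X * (Y * X)) * w from by group, b1]; group
lemma b2c : ∀ w : W, Z * (Y * (Z * w)) = Y * (Z * (Y * w)) := by
  intro w
  rw [show Z * (Y * (Z * w)) = (Z * (Y * Z)) * w from by group, ← b2]; group

-- maps into W
def fN : F2 →* W := FreeGroup.lift ![Z * X, Y * (Z * (X * Y))]

lemma fN_p : fN pp = Z * X := by simp [fN, pp]
lemma fN_q : fN qq = Y * (Z * (X * Y)) := by simp [fN, qq]

lemma hgS : ∀ r ∈ rels3, FreeGroup.lift ![X, Y] r = 1 := by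
  rintro r (rfl | rfl | rfl) <;>
    simp only [map_pow, map_mul, FreeGroup.lift_apply_of, Matrix.cons_val_zero, Matrix.cons_val_one,
      Matrix.head_cons]
  · exact wx2
  · exact wy2
  · exact wxy3

def gS : S3 →* W := PresentedGroup.toGroup hgS

lemma gS0 : gS (PresentedGroup.of 0) = X := PresentedGroup.toGroup.of hgS
lemma gS1 : gS (PresentedGroup.of 1) = Y := PresentedGroup.toGroup.of hgS

end Wnotation

def Hcompat : Subgroup S3 where
  carrier := {s | ∀ n : F2, fN (α s n) = gS s * fN n * (gS s)⁻¹}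
  one_mem' := by intro n; simp
  mul_mem' := by
    intro a b ha hb n
    rw [map_mul, MulAut.mul_apply, ha, hb, map_mul]
    group
  inv_mem' := by
    intro a ha n
    have h1 := ha (α a⁻¹ n)
    have h2 : α a (α a⁻¹ n) = n := by
      rw [← MulAut.mul_apply, ← map_mul, mul_inv_cancel, map_one, MulAut.one_apply]
    rw [h2] at h1
    have h3 : fN ((α a⁻¹) n) = (gS a)⁻¹ * fN n * gS a := by rw [h1]; group
    rw [h3, map_inv]; group

lemma compat0 : (PresentedGroup.of 0 : S3) ∈ Hcompat := by
  intro n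
  have key : fN.comp (α (PresentedGroup.of 0)).toMonoidHom =
      (MulAut.conj (gS (PresentedGroup.of 0))).toMonoidHom.comp fN := by
    rw [α_x, gS0]
    ext i
    fin_cases i
    · show fN (fA pp) = PresentedGroup.of 0 * fN pp * (PresentedGroup.of 0)⁻¹
      rw [fA_p, map_inv, fN_p, mul_inv_rev, invx, invz]
      simp [mul_assoc, ix]
    · show fN (fA qq) = PresentedGroup.of 0 * fN qq * (PresentedGroup.of 0)⁻¹
      rw [fA_q, map_mul, map_inv, fN_p, fN_q, mul_inv_rev, invx, invz]
      simp only [mul_assoc]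
      rw [b2c, b1]
  have := DFunLike.congr_fun key n
  simpa [MulAut.conj_apply] using this

lemma compat1 : (PresentedGroup.of 1 : S3) ∈ Hcompat := by
  intro n
  have key : fN.comp (α (PresentedGroup.of 1)).toMonoidHom =
      (MulAut.conj (gS (PresentedGroup.of 1))).toMonoidHom.comp fN := by
    rw [α_y, gS1]
    ext i
    fin_cases i
    · show fN (fB pp) = PresentedGroup.of 1 * fN pp * (PresentedGroup.of 1)⁻¹
      rw [fB_p, fN_q, fN_p, invy]
      simp [mul_assoc]
    · show fN (fB qq) = PresentedGroup.of 1 * fN qq * (PresentedGroup.of 1)⁻¹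
      rw [fB_q, fN_p, fN_q, invy]
      simp [mul_assoc, iyc, iy]
  have := DFunLike.congr_fun key n
  simpa [MulAut.conj_apply] using this

lemma compat : ∀ s : S3,
    fN.comp (α s).toMonoidHom = (MulAut.conj (gS s)).toMonoidHom.comp fN := by
  intro s
  have hs : s ∈ Hcompat := by
    refine PresentedGroup.generated_by rels3 Hcompat ?_ s
    intro j
    fin_cases j
    · exact compat0
    · exact compat1
  ext n
  simpa [MulAut.conj_apply] using hs (FreeGroup.of n)

def ρ : G →* W := SemidirectProduct.lift fN gS compat

lemma hρψ : ρ.comp ψ = MonoidHom.id W := by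
  apply PresentedGroup.ext
  intro i
  fin_cases i
  · simp [ψ0, gx, ρ, gS0]
  · simp [ψ1, gy, ρ, gS1]
  · show ρ (ψ (PresentedGroup.of 2)) = _
    rw [ψ2, gz, map_mul]
    simp only [ρ, SemidirectProduct.lift_inl, SemidirectProduct.lift_inr, gS0, fN_p]
    rw [mul_assoc, ix, mul_one]
    rfl

abbrev Dl := PresentedGroup relsDelta

lemma dy2 : (PresentedGroup.of 1 : Dl) ^ 2 = 1 := by
  have := mk_rel (show FreeGroup.of 1 ^ 2 ∈ relsDelta by right; left; rfl); simpa [PresentedGroup.of] using this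

lemma dxz2 : ((PresentedGroup.of 0 : Dl) * PresentedGroup.of 2) ^ 2 = 1 := by
  have := mk_rel (show (FreeGroup.of 0 * FreeGroup.of 2) ^ 2 ∈ relsDelta by
    right; right; right; right; right; rfl)
  simpa [PresentedGroup.of] using this

lemma hσ : ∀ r ∈ relsDelta, FreeGroup.lift
    ![(PresentedGroup.of 0 : S3), PresentedGroup.of 1, PresentedGroup.of 0] r = 1 := by
  rintro r (rfl | rfl | rfl | rfl | rfl | rfl) <;>
    simp only [map_pow, map_mul, FreeGroup.lift_apply_of, Matrix.cons_val_zero, Matrix.cons_val_one,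
      Matrix.head_cons, Matrix.cons_val_two, Matrix.tail_cons]
  · exact sx2
  · exact sy2
  · exact sx2
  · exact sxy3
  · exact syx3
  · rw [← pow_two, ← pow_mul, show 2 * 2 = 2 * 2 from rfl, pow_mul, sx2, one_pow]


def σD : Dl →* S3 := PresentedGroup.toGroup hσ

lemma σD0 : σD (PresentedGroup.of 0) = PresentedGroup.of 0 := PresentedGroup.toGroup.of hσ
lemma σD1 : σD (PresentedGroup.of 1) = PresentedGroup.of 1 := PresentedGroup.toGroup.of hσ
lemma σD2 : σD (PresentedGroup.of 2) = PresentedGroup.of 0 := PresentedGroup.toGroup.of hσ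

/-- The kernel of the canonical surjection
`W = ⟨x, y, z | x², y², z², (xy)³, (yz)³⟩ → Δ(3,3,2)` (sending generators to generators)
is a free group, and it is nonabelian. -/
theorem stmt_9 (φ : PresentedGroup relsW →* PresentedGroup relsDelta)
    (hφ : ∀ i : Fin 3, φ (PresentedGroup.of i) = PresentedGroup.of i) :
    IsFreeGroup φ.ker ∧ ∃ a b : φ.ker, a * b ≠ b * a := by
  -- the right component of ψ on the kernel is trivial
  have hrw : (SemidirectProduct.rightHom (φ := α)).comp ψ = σD.comp φ := by
    apply PresentedGroup.ext
    intro i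
    fin_cases i
    · show SemidirectProduct.rightHom (ψ (PresentedGroup.of 0)) = σD (φ (PresentedGroup.of 0))
      rw [ψ0, hφ 0, σD0, gx, SemidirectProduct.rightHom_inr]
    · show SemidirectProduct.rightHom (ψ (PresentedGroup.of 1)) = σD (φ (PresentedGroup.of 1))
      rw [ψ1, hφ 1, σD1, gy, SemidirectProduct.rightHom_inr]
    · show SemidirectProduct.rightHom (ψ (PresentedGroup.of 2)) = σD (φ (PresentedGroup.of 2))
      rw [ψ2, hφ 2, σD2, gz, map_mul, SemidirectProduct.rightHom_inr,
        SemidirectProduct.rightHom_inl, one_mul]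
  have hright : ∀ w : W, w ∈ φ.ker → (ψ w).right = 1 := by
    intro w hw
    have : SemidirectProduct.rightHom (ψ w) = σD (φ w) := DFunLike.congr_fun hrw w
    rw [MonoidHom.mem_ker.mp hw, map_one] at this
    exact this
  -- the homomorphism from the kernel to the free group F2
  have jmul : ∀ u v : φ.ker, (ψ ((u * v : φ.ker) : W)).left =
      (ψ (u : W)).left * (ψ (v : W)).left := by
    intro u v
    rw [Subgroup.coe_mul, map_mul, SemidirectProduct.mul_left, hright _ u.2, map_one,
      MulAut.one_apply]
  let j : φ.ker →* F2 := MonoidHom.mk' (fun v => (ψ (v : W)).left) jmul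
  have hinj : Function.Injective j := by
    rw [injective_iff_map_eq_one]
    intro a ha
    have h1 : ψ (a : W) = 1 := by
      ext
      · exact ha
      · rw [hright _ a.2]; rfl
    have h2 : (a : W) = 1 := by
      have := DFunLike.congr_fun hρψ (a : W)
      rw [MonoidHom.comp_apply, h1, map_one] at this
      exact this.symm ▸ rfl
    exact Subtype.ext h2
  constructor
  · exact IsFreeGroup.ofMulEquiv (MonoidHom.ofInjective hinj).symm
  · -- the noncommuting elements
    have ha : ((PresentedGroup.of 0 * PresentedGroup.of 2 : W) ^ 2) ∈ φ.ker := by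
      rw [MonoidHom.mem_ker, map_pow, map_mul, hφ 0, hφ 2]
      exact dxz2
    have hb : (PresentedGroup.of 1 * (PresentedGroup.of 0 * PresentedGroup.of 2 : W) ^ 2 *
        PresentedGroup.of 1) ∈ φ.ker := by
      rw [MonoidHom.mem_ker, map_mul, map_mul, map_pow, map_mul, hφ 0, hφ 1, hφ 2, dxz2,
        mul_one, ← pow_two]
      exact dy2
    refine ⟨⟨_, ha⟩, ⟨_, hb⟩, ?_⟩
    intro hcon
    have hcon' : ((PresentedGroup.of 0 * PresentedGroup.of 2 : W) ^ 2) *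
        (PresentedGroup.of 1 * (PresentedGroup.of 0 * PresentedGroup.of 2 : W) ^ 2 *
          PresentedGroup.of 1) =
        (PresentedGroup.of 1 * (PresentedGroup.of 0 * PresentedGroup.of 2 : W) ^ 2 *
          PresentedGroup.of 1) * ((PresentedGroup.of 0 * PresentedGroup.of 2 : W) ^ 2) := by
      have := Subtype.ext_iff.mp hcon
      simpa [PresentedGroup.of] using this
    -- compute images under ψ
    have hxz : ψ (PresentedGroup.of 0 * PresentedGroup.of 2 : W) = SemidirectProduct.inl pp⁻¹ := by
      rw [map_mul, ψ0, ψ2, gx, gz]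
      ext
      · simp [SemidirectProduct.mul_left, α_x, A_apply, fA_p]
      · simp only [SemidirectProduct.mul_right, SemidirectProduct.right_inr,
          SemidirectProduct.right_inl, SemidirectProduct.mul_right, mul_one,
          SemidirectProduct.left_inl, one_mul]
        rw [← pow_two]
        exact sx2
    have hψa : ψ ((PresentedGroup.of 0 * PresentedGroup.of 2 : W) ^ 2) =
        SemidirectProduct.inl (pp⁻¹ * pp⁻¹) := by
      rw [map_pow, hxz, ← map_pow, pow_two]
    have hψb : ψ (PresentedGroup.of 1 * (PresentedGroup.of 0 * PresentedGroup.of 2 : W) ^ 2 *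
        PresentedGroup.of 1) = SemidirectProduct.inl (qq⁻¹ * qq⁻¹) := by
      rw [map_mul, map_mul, hψa, ψ1, gy]
      ext
      · simp only [SemidirectProduct.mul_left, SemidirectProduct.left_inr,
          SemidirectProduct.left_inl, SemidirectProduct.mul_right, SemidirectProduct.right_inr,
          SemidirectProduct.right_inl, one_mul, mul_one, map_one]
        rw [α_y, B_apply]
        simp [fB_p, fB_q, map_mul, map_inv, MulAut.one_apply]
      · simp only [SemidirectProduct.mul_right, SemidirectProduct.right_inr,
          SemidirectProduct.right_inl, one_mul, mul_one, SemidirectProduct.left_inl]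
        rw [← pow_two]
        exact sy2
    have h2 : ψ ((PresentedGroup.of 0 * PresentedGroup.of 2 : W) ^ 2) *
        ψ (PresentedGroup.of 1 * (PresentedGroup.of 0 * PresentedGroup.of 2 : W) ^ 2 *
          PresentedGroup.of 1) =
        ψ (PresentedGroup.of 1 * (PresentedGroup.of 0 * PresentedGroup.of 2 : W) ^ 2 *
          PresentedGroup.of 1) * ψ ((PresentedGroup.of 0 * PresentedGroup.of 2 : W) ^ 2) := by
      rw [← map_mul, ← map_mul, hcon']
    rw [hψa, hψb, ← map_mul, ← map_mul] at h2
    have hfree := SemidirectProduct.inl_injective h2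
    have : pp⁻¹ * pp⁻¹ * (qq⁻¹ * qq⁻¹) ≠ qq⁻¹ * qq⁻¹ * (pp⁻¹ * pp⁻¹) := by decide
    exact this hfree
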